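/- (One-step linear contraction for exact DPO-Unif.) Let R ≥ 1 and let θ ∈ ℝ^𝒴 satisfy |β(θ_a − θ_{a'})| ≤ R for all a, a' ∈ 𝒴. Let θ' ∈ ℝ^𝒴 be obtained by one exact DPO-Unif step with learning rate η = 1/(β²A): θ'_a = θ_a + (4/(βA)) Σ_{a''∈𝒴} Δ(a,a'';θ) for every a. Then for all a, a' ∈ 𝒴, |δ(a,a';θ')| ≤ (2 − 8σ'(R)) · max_{b,b'∈𝒴} |δ(b,b';θ)|. -/

import Mathlib

/-- The sigmoid function. -/
noncomputable def sig (x : ℝ) : ℝ := 1 / (1 + Real.exp (-x))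

/-- The derivative of the sigmoid function. -/
noncomputable def sig' (x : ℝ) : ℝ := sig x * (1 - sig x)

lemma sig_hasDerivAt (x : ℝ) : HasDerivAt sig (sig' x) x := by
  have h1 : HasDerivAt (fun x : ℝ => 1 + Real.exp (-x)) (-Real.exp (-x)) x := by
    have h := (Real.hasDerivAt_exp (-x)).comp x (hasDerivAt_neg x)
    exact ((hasDerivAt_const x (1:ℝ)).add h).congr_deriv (by simp)
  have hne : (1 + Real.exp (-x)) ≠ 0 := by positivity
  have h2 := h1.inv hne
  have heq : -(-Real.exp (-x)) / (1 + Real.exp (-x)) ^ 2 = sig' x := by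
    unfold sig' sig
    have := (Real.exp_pos (-x)).ne'
    field_simp
    ring
  rw [heq] at h2
  have hsig : sig = (fun x : ℝ => 1 + Real.exp (-x))⁻¹ := by
    funext y
    simp [sig, one_div]
  rw [hsig]; exact h2

lemma sig'_eq (x : ℝ) : sig' x = 1 / (Real.exp x + 2 + Real.exp (-x)) := by
  have h : Real.exp x ≠ 0 := (Real.exp_pos x).ne'
  have h2 : (0:ℝ) < Real.exp x + 2 + Real.exp (-x) := by positivity
  unfold sig' sig
  rw [Real.exp_neg]
  have h3 : (1 + (Real.exp x)⁻¹) ≠ 0 := by positivity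
  field_simp
  ring

lemma sig'_le_quarter (x : ℝ) : sig' x ≤ 1/4 := by
  rw [sig'_eq]
  have h1 : Real.exp x * Real.exp (-x) = 1 := by
    rw [← Real.exp_add]; simp
  have h2 : (0:ℝ) < Real.exp x + 2 + Real.exp (-x) := by positivity
  rw [div_le_div_iff₀ h2 (by norm_num)]
  nlinarith [sq_nonneg (Real.exp x - 1), Real.exp_pos x, Real.exp_pos (-x)]

lemma sig'_anti {c R : ℝ} (h : |c| ≤ R) : sig' R ≤ sig' c := by
  rw [sig'_eq, sig'_eq]
  have hc : Real.exp c + 2 + Real.exp (-c) ≤ Real.exp R + 2 + Real.exp (-R) := by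
    have h1 : Real.cosh c ≤ Real.cosh R := by
      rw [Real.cosh_le_cosh]
      calc |c| ≤ R := h
        _ ≤ |R| := le_abs_self R
    rw [Real.cosh_eq, Real.cosh_eq] at h1
    linarith
  have h2 : (0:ℝ) < Real.exp c + 2 + Real.exp (-c) := by positivity
  exact one_div_le_one_div_of_le h2 hc

lemma sig_slope {R x y : ℝ} (hx : |x| ≤ R) (hy : |y| ≤ R) :
    ∃ l, sig' R ≤ l ∧ l ≤ 1/4 ∧ sig x - sig y = l * (x - y) := by
  have quart : sig' R ≤ 1/4 := sig'_le_quarter R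
  have main : ∀ u v : ℝ, u < v → |u| ≤ R → |v| ≤ R →
      ∃ l, sig' R ≤ l ∧ l ≤ 1/4 ∧ sig v - sig u = l * (v - u) := by
    intro u v huv hu hv
    obtain ⟨c, hc, hc'⟩ := exists_hasDerivAt_eq_slope sig sig' huv
      (fun z _ => (sig_hasDerivAt z).continuousAt.continuousWithinAt)
      (fun z _ => sig_hasDerivAt z)
    refine ⟨sig' c, ?_, sig'_le_quarter c, ?_⟩
    · apply sig'_anti
      rw [abs_le] at hu hv ⊢
      exact ⟨by linarith [hc.1], by linarith [hc.2]⟩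
    · have hne : v - u ≠ 0 := sub_ne_zero.mpr (ne_of_gt huv)
      rw [hc', div_mul_cancel₀ _ hne]
  rcases lt_trichotomy x y with h | h | h
  · obtain ⟨l, h1, h2, h3⟩ := main x y h hx hy
    exact ⟨l, h1, h2, by linarith [h3]⟩
  · exact ⟨sig' R, le_refl _, quart, by rw [h]; ring⟩
  · obtain ⟨l, h1, h2, h3⟩ := main y x h hy hx
    exact ⟨l, h1, h2, by linarith [h3]⟩

/-- **One-step linear contraction for exact DPO-Unif.**
If all logit gaps `β(θ_a - θ_{a'})` are bounded by `R ≥ 1`, then one exact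
DPO-Unif step with learning rate `η = 1/(β²A)` contracts the reward-gap
errors by a factor `2 - 8σ'(R)`. -/
theorem dpo_unif_one_step_contraction
    {Y : Type*} [Fintype Y] [Nonempty Y]
    (A : ℕ) (hA : A = Fintype.card Y)
    (r : Y → ℝ) (hr : ∀ a, 0 ≤ r a ∧ r a ≤ 1)
    (β : ℝ) (hβ : 0 < β)
    (R : ℝ) (hR : 1 ≤ R)
    (θ θ' : Y → ℝ)
    (hbound : ∀ a a', |β * (θ a - θ a')| ≤ R)
    (hupd : ∀ a, θ' a = θ a +
      (4 / (β * A)) * ∑ a'' : Y, (sig (r a - r a'') - sig (β * (θ a - θ a'')))) :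
    ∀ a a' : Y,
      |r a - r a' - β * (θ' a - θ' a')| ≤
        (2 - 8 * sig' R) * ⨆ p : Y × Y, |r p.1 - r p.2 - β * (θ p.1 - θ p.2)| := by
  intro a a'
  classical
  set D : Y → Y → ℝ := fun p q => r p - r q - β * (θ p - θ q) with hD
  set M : ℝ := ⨆ p : Y × Y, |r p.1 - r p.2 - β * (θ p.1 - θ p.2)| with hMdef
  have hA0 : (0:ℝ) < (A:ℝ) := by
    have := Fintype.card_pos (α := Y)
    rw [hA]; exact_mod_cast this
  have hbdd : BddAbove (Set.range fun p : Y × Y => |r p.1 - r p.2 - β * (θ p.1 - θ p.2)|) :=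
    Set.Finite.bddAbove (Set.finite_range _)
  have hM : ∀ p q : Y, |D p q| ≤ M := fun p q => le_ciSup hbdd (p, q)
  have hM0 : 0 ≤ M :=
    le_trans (abs_nonneg _) (hM (Classical.arbitrary Y) (Classical.arbitrary Y))
  have hr1 : ∀ p q : Y, |r p - r q| ≤ R := by
    intro p q
    rw [abs_le]
    constructor <;> [skip; skip] <;>
      linarith [(hr p).1, (hr p).2, (hr q).1, (hr q).2]
  have hsl : ∀ p q : Y, ∃ l, sig' R ≤ l ∧ l ≤ 1/4 ∧
      sig (r p - r q) - sig (β * (θ p - θ q)) = l * D p q :=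
    fun p q => sig_slope (hr1 p q) (hbound p q)
  choose lam hlam1 hlam2 hlam3 using hsl
  have hsR : sig' R ≤ 1/4 := le_trans (hlam1 a a) (hlam2 a a)
  -- key identity
  have e1 : ∀ p : Y, ∑ a'' : Y, (sig (r p - r a'') - sig (β * (θ p - θ a'')))
      = ∑ a'' : Y, lam p a'' * D p a'' :=
    fun p => Finset.sum_congr rfl fun a'' _ => hlam3 p a''
  have e2 : ∑ a'' : Y, (D a a'' - D a' a'') = (A:ℝ) * (r a - r a' - β * (θ a - θ a')) := by
    have h : ∀ a'' : Y, D a a'' - D a' a'' = r a - r a' - β * (θ a - θ a') := by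
      intro a''; simp only [hD]; ring
    rw [Finset.sum_congr rfl fun a'' _ => h a'', Finset.sum_const, hA]
    simp [nsmul_eq_mul]
  have expand : ∑ a'' : Y, ((1 - 4 * lam a a'') * D a a'' - (1 - 4 * lam a' a'') * D a' a'')
      = (∑ a'' : Y, (D a a'' - D a' a''))
        - 4 * (∑ a'' : Y, lam a a'' * D a a'') + 4 * (∑ a'' : Y, lam a' a'' * D a' a'') := by
    rw [Finset.mul_sum, Finset.mul_sum, ← Finset.sum_sub_distrib, ← Finset.sum_add_distrib]
    exact Finset.sum_congr rfl fun x _ => by ring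
  have key : r a - r a' - β * (θ' a - θ' a')
      = (1/(A:ℝ)) * ∑ a'' : Y,
          ((1 - 4 * lam a a'') * D a a'' - (1 - 4 * lam a' a'') * D a' a'') := by
    rw [expand, e2, hupd a, hupd a', e1 a, e1 a']
    have hβ0 : β ≠ 0 := hβ.ne'
    field_simp
    ring
  -- per-term bound
  have term : ∀ a'' : Y, |(1 - 4 * lam a a'') * D a a'' - (1 - 4 * lam a' a'') * D a' a''|
      ≤ (2 - 8 * sig' R) * M := by
    intro a''
    have h1 := hlam1 a a''; have h2 := hlam2 a a''
    have h3 := hlam1 a' a''; have h4 := hlam2 a' a''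
    calc |(1 - 4 * lam a a'') * D a a'' - (1 - 4 * lam a' a'') * D a' a''|
        ≤ |(1 - 4 * lam a a'') * D a a''| + |(1 - 4 * lam a' a'') * D a' a''| := abs_sub _ _
      _ = (1 - 4 * lam a a'') * |D a a''| + (1 - 4 * lam a' a'') * |D a' a''| := by
          rw [abs_mul, abs_mul,
            abs_of_nonneg (show (0:ℝ) ≤ 1 - 4 * lam a a'' by linarith),
            abs_of_nonneg (show (0:ℝ) ≤ 1 - 4 * lam a' a'' by linarith)]
      _ ≤ (1 - 4 * sig' R) * M + (1 - 4 * sig' R) * M := by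
          gcongr <;> first | linarith | exact hM _ _
      _ = (2 - 8 * sig' R) * M := by ring
  calc |r a - r a' - β * (θ' a - θ' a')|
      = (1/(A:ℝ)) * |∑ a'' : Y,
          ((1 - 4 * lam a a'') * D a a'' - (1 - 4 * lam a' a'') * D a' a'')| := by
        rw [key, abs_mul, abs_of_pos (by positivity : (0:ℝ) < 1/(A:ℝ))]
    _ ≤ (1/(A:ℝ)) * ∑ a'' : Y,
          |(1 - 4 * lam a a'') * D a a'' - (1 - 4 * lam a' a'') * D a' a''| := by
        exact mul_le_mul_of_nonneg_left (Finset.abs_sum_le_sum_abs _ _) (by positivity)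
    _ ≤ (1/(A:ℝ)) * ∑ _a'' : Y, (2 - 8 * sig' R) * M := by
        exact mul_le_mul_of_nonneg_left (Finset.sum_le_sum fun a'' _ => term a'') (by positivity)
    _ = (2 - 8 * sig' R) * M := by
        rw [Finset.sum_const, Finset.card_univ, hA, nsmul_eq_mul]
        field_simp
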